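/- Let $L(X) = X + X^2 + X^8$ over $\mathbb{F}_2$ and let $n$ be a positive integer with $7 \nmid n$. Then for every $a \in \mathbb{F}_{2^n}$ the equation $L(x) = a$ has exactly one solution $x \in \mathbb{F}_{2^n}$. -/

import Mathlib

section aux

private lemma aux_iter {K : Type*} [CommRing K] {z : K} {k : ℕ} (h : z ^ (2 ^ k) = z) :
    ∀ j, z ^ (2 ^ (k * j)) = z := by
  intro j
  induction j with
  | zero => simp
  | succ j ih =>
    have hkj : k * (j + 1) = k * j + k := by ring
    rw [hkj, pow_add, pow_mul, ih, h]

private lemma aux_ker (n : ℕ) (hn : 0 < n) (h7 : ¬ (7 ∣ n)) (z : GaloisField 2 n)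
    (hz : z + z ^ 2 + z ^ 8 = 0) : z = 0 := by
  by_contra hz0
  have htwo : (2 : GaloisField 2 n) = 0 := by
    exact_mod_cast (CharP.cast_eq_zero (GaloisField 2 n) 2)
  have h8 : z ^ 8 = z ^ 2 + z := by
    linear_combination hz - (z ^ 2 + z) * htwo
  have h16 : z ^ 16 = z ^ 4 + z ^ 2 := by
    linear_combination (z ^ 8 + z ^ 2 + z) * h8 + z ^ 3 * htwo
  have h32 : z ^ 32 = z ^ 8 + z ^ 4 := by
    linear_combination (z ^ 16 + z ^ 4 + z ^ 2) * h16 + z ^ 6 * htwo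
  have h64 : z ^ 64 = z ^ 4 + z := by
    linear_combination (z ^ 32 + z ^ 8 + z ^ 4) * h32 + h16 + h8 + (z ^ 12 + z ^ 2) * htwo
  have h128 : z ^ (2 ^ 7) = z := by
    linear_combination (z ^ 64 + z ^ 4 + z) * h64 + h8 + (z ^ 5 + z ^ 2) * htwo
  haveI : Fintype (GaloisField 2 n) := Fintype.ofFinite _
  have hcard : z ^ (2 ^ n) = z := by
    have h := FiniteField.pow_card (K := GaloisField 2 n) z
    rwa [← Nat.card_eq_fintype_card, GaloisField.card 2 n hn.ne'] at h
  have hz2 : z ^ 2 = z := by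
    rcases Nat.lt_or_ge n 2 with h1 | h2
    · interval_cases n
      simpa using hcard
    · have hco : Nat.Coprime 7 n :=
        (Nat.Prime.coprime_iff_not_dvd (by norm_num)).mpr h7
      obtain ⟨m, -, hm⟩ := Nat.exists_mul_mod_eq_one_of_coprime hco h2
      have hdm : 7 * m = n * (7 * m / n) + 1 := by
        conv_lhs => rw [← Nat.div_add_mod (7 * m) n]
        rw [hm]
      calc z ^ 2 = (z ^ (2 ^ (n * (7 * m / n)))) ^ 2 := by
            rw [aux_iter hcard (7 * m / n)]
        _ = z ^ (2 ^ (n * (7 * m / n)) * 2) := by rw [← pow_mul]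
        _ = z ^ (2 ^ (n * (7 * m / n) + 1)) := by rw [pow_succ]
        _ = z ^ (2 ^ (7 * m)) := by rw [← hdm]
        _ = z := aux_iter h128 m
  have hz1 : z = 1 := by
    have h : z * z = z * 1 := by rw [mul_one]; linear_combination hz2
    exact mul_left_cancel₀ hz0 h
  rw [hz1] at hz
  have : (1 : GaloisField 2 n) = 0 := by linear_combination hz - htwo
  exact one_ne_zero this

end aux

theorem stmt17 (n : ℕ) (hn : 0 < n) (h7 : ¬ (7 ∣ n)) (a : GaloisField 2 n) :
    ∃! x : GaloisField 2 n, x + x ^ 2 + x ^ 8 = a := by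
  have htwo : (2 : GaloisField 2 n) = 0 := by
    exact_mod_cast (CharP.cast_eq_zero (GaloisField 2 n) 2)
  have hinj : Function.Injective (fun x : GaloisField 2 n => x + x ^ 2 + x ^ 8) := by
    intro x y hxy
    simp only at hxy
    have hsq : (x + y) ^ 2 = x ^ 2 + y ^ 2 := by
      linear_combination (x * y) * htwo
    have h8 : (x + y) ^ 8 = x ^ 8 + y ^ 8 := by
      have h : (x + y) ^ 2 ^ 3 = x ^ 2 ^ 3 + y ^ 2 ^ 3 := add_pow_char_pow ..
      norm_num at h
      exact h
    have hker : (x + y) + (x + y) ^ 2 + (x + y) ^ 8 = 0 := by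
      rw [hsq, h8]
      linear_combination hxy + (y + y ^ 2 + y ^ 8) * htwo
    have hz := aux_ker n hn h7 (x + y) hker
    linear_combination hz - y * htwo
  have hbij : Function.Bijective (fun x : GaloisField 2 n => x + x ^ 2 + x ^ 8) :=
    (Finite.injective_iff_bijective).mp hinj
  obtain ⟨x, hx⟩ := hbij.2 a
  exact ⟨x, hx, fun y hy => hinj (hy.trans hx.symm)⟩
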